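/- arXiv:2105.13002 — 4 statements merged into one kernel-verified Lean document; each statement's English description precedes it below -/
import Mathlib

section
/- Let ψ(m,p) = E[X²] + m² p − 2 m ∫_{1−p}^{1} Q(t) dt where Q is the quantile function of a square-integrable nonnegative random variable X. If (m_X, p_X) with m_X ≠ 0, p_X ∈ (0,1) is a critical point of ψ, then m_X = 2 Q(1 − p_X) and m_X = (1/p_X) ∫_{1−p_X}^{1} Q(t) dt. -/
open MeasureTheory

set_option maxHeartbeats 1000000 in
/-- First-order conditions: if `(m_X, p_X)` with `m_X ≠ 0`, `p_X ∈ (0,1)` is a critical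
point of `ψ(m,p) = E[X²] + m²p − 2m∫_{1−p}^1 Q(t)dt`, then `m_X = 2Q(1−p_X)` and
`m_X = (1/p_X)∫_{1−p_X}^1 Q(t)dt`. -/
theorem critical_point_magnitude_propensity
    {Ω : Type*} [MeasurableSpace Ω] (P : Measure Ω) [IsProbabilityMeasure P]
    (X : Ω → ℝ) (hXm : Measurable X) (hX0 : ∀ ω, 0 ≤ X ω) (hX2 : MemLp X 2 P)
    (Q : ℝ → ℝ)
    (hQ : ∀ t ∈ Set.Ioo (0 : ℝ) 1,
      Q t = sInf {x : ℝ | ENNReal.ofReal t ≤ P.map X (Set.Iic x)})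
    (hQi : IntervalIntegrable Q volume 0 1)
    (ψ : ℝ → ℝ → ℝ)
    (hψ : ∀ m p, ψ m p =
      (∫ ω, (X ω) ^ 2 ∂P) + m ^ 2 * p - 2 * m * ∫ t in (1 - p)..1, Q t)
    (m_X p_X : ℝ) (hm : m_X ≠ 0) (hp : p_X ∈ Set.Ioo (0 : ℝ) 1)
    (hQc : ContinuousAt Q (1 - p_X))
    (hcrit_m : HasDerivAt (fun m => ψ m p_X) 0 m_X)
    (hcrit_p : HasDerivAt (fun p => ψ m_X p) 0 p_X) :
    m_X = 2 * Q (1 - p_X) ∧ m_X = (∫ t in (1 - p_X)..1, Q t) / p_X := by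
  obtain ⟨hp0, hp1⟩ := hp
  set C : ℝ := ∫ ω, (X ω) ^ 2 ∂P with hC
  set I : ℝ := ∫ t in (1 - p_X)..1, Q t with hI
  have hu : (1 - p_X) ∈ Set.Ioo (0:ℝ) 1 := ⟨by linarith, by linarith⟩
  -- derivative in m
  have hdm : HasDerivAt (fun m => ψ m p_X) (2 * m_X * p_X - 2 * I) m_X := by
    have : HasDerivAt (fun m : ℝ => C + m ^ 2 * p_X - 2 * m * I)
        (2 * m_X * p_X - 2 * I) m_X := by
      have h1 : HasDerivAt (fun m : ℝ => m ^ 2) (2 * m_X) m_X := by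
        simpa using (hasDerivAt_pow 2 m_X)
      have h2 := ((hasDerivAt_const m_X C).add (h1.mul_const p_X)).sub
        (((hasDerivAt_id m_X).const_mul 2).mul_const I)
      exact h2.congr_deriv (by ring)
    simpa only [hψ] using this
  have heq_m : 2 * m_X * p_X - 2 * I = 0 := hdm.unique hcrit_m
  -- derivative in p
  have hii : IntervalIntegrable Q volume (1 - p_X) 1 :=
    hQi.mono_set (by
      rw [Set.uIcc_of_le (by linarith), Set.uIcc_of_le (by norm_num)]
      exact Set.Icc_subset_Icc (by linarith) le_rfl)
  have h1 : IntegrableOn Q (Set.Ioc 0 1) volume := hQi.1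
  have h2 : IntegrableOn Q (Set.Ioo 0 1) volume := h1.mono_set Set.Ioo_subset_Ioc_self
  have hsm : StronglyMeasurableAtFilter Q (nhds (1 - p_X)) volume :=
    ⟨Set.Ioo 0 1, isOpen_Ioo.mem_nhds hu, h2.aestronglyMeasurable⟩
  have hfund : HasDerivAt (fun u => ∫ t in u..1, Q t) (-Q (1 - p_X)) (1 - p_X) :=
    intervalIntegral.integral_hasDerivAt_left hii hsm hQc
  have hsub : HasDerivAt (fun p : ℝ => 1 - p) (-1) p_X := by
    simpa using (hasDerivAt_id p_X).const_sub (1:ℝ)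
  have hIp : HasDerivAt (fun p : ℝ => ∫ t in (1 - p)..1, Q t) (Q (1 - p_X)) p_X := by
    have := hfund.comp p_X hsub
    simpa [Function.comp_def] using this
  have hdp : HasDerivAt (fun p => ψ m_X p)
      (m_X ^ 2 - 2 * m_X * Q (1 - p_X)) p_X := by
    have : HasDerivAt (fun p : ℝ => C + m_X ^ 2 * p - 2 * m_X * ∫ t in (1 - p)..1, Q t)
        (m_X ^ 2 - 2 * m_X * Q (1 - p_X)) p_X := by
      have h2 := ((hasDerivAt_const p_X C).add ((hasDerivAt_id p_X).const_mul (m_X ^ 2))).sub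
        (hIp.const_mul (2 * m_X))
      exact h2.congr_deriv (by ring)
    simpa only [hψ] using this
  have heq_p : m_X ^ 2 - 2 * m_X * Q (1 - p_X) = 0 := hdp.unique hcrit_p
  constructor
  · have : m_X * (m_X - 2 * Q (1 - p_X)) = 0 := by ring_nf; nlinarith [heq_p]
    rcases mul_eq_zero.mp this with h | h
    · exact absurd h hm
    · linarith
  · field_simp
    linarith [heq_m]
end

section
/- Let X have Pareto law P(X > x) = (1+x)^{−θ} for x ≥ 0 with θ > 2. Then E[X | X > a] = (θ/(θ−1))(1+a) − 1 for a ≥ 0, the unique nonnegative solution of 2a = E[X | X > a] is a = 1/(θ−2), and the optimal magnitude-propensity pair is m_X = 2/(θ−2), p_X = ((θ−2)/(θ−1))^θ. -/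
open MeasureTheory

lemma pareto_aux_deriv (θ a : ℝ) (hθ : 2 < θ) (ha : 0 ≤ a) :
    ∀ x ∈ Set.Ici (0:ℝ), HasDerivAt (fun t => -(1 + a + t) ^ (1 - θ) / (θ - 1))
      ((1 + a + x) ^ (-θ)) x := by
  intro x hx
  have hx0 : (0:ℝ) ≤ x := hx
  have hpos : 0 < 1 + a + x := by linarith
  have h1 : HasDerivAt (fun t : ℝ => 1 + a + t) 1 x := by
    simpa using (hasDerivAt_id x).const_add (1 + a)
  have h2 : HasDerivAt (fun t : ℝ => (1 + a + t) ^ (1 - θ))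
      (1 * (1 - θ) * (1 + a + x) ^ (1 - θ - 1)) x :=
    h1.rpow_const (Or.inl (ne_of_gt hpos))
  have h3 := (h2.neg).div_const (θ - 1)
  convert h3 using 1
  case e'_4 => rfl
  case e'_5 => rfl
  case e'_8 => rfl
  have : 1 - θ - 1 = -θ := by ring
  rw [this, eq_div_iff (by linarith : θ - 1 ≠ 0)]
  ring

lemma pareto_aux_tendsto (θ a : ℝ) (hθ : 2 < θ) :
    Filter.Tendsto (fun t => -(1 + a + t) ^ (1 - θ) / (θ - 1)) Filter.atTop (nhds 0) := by
  have h1 : Filter.Tendsto (fun t : ℝ => 1 + a + t) Filter.atTop Filter.atTop :=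
    Filter.tendsto_atTop_add_const_left _ _ Filter.tendsto_id
  have h2 : Filter.Tendsto (fun t : ℝ => (1 + a + t) ^ (1 - θ)) Filter.atTop (nhds 0) := by
    have := (tendsto_rpow_neg_atTop (by linarith : (0:ℝ) < θ - 1)).comp h1
    simpa [Function.comp_def, show -(θ-1) = 1 - θ by ring] using this
  have := (h2.neg).div_const (θ - 1)
  simpa using this

lemma pareto_aux_int (θ a : ℝ) (hθ : 2 < θ) (ha : 0 ≤ a) :
    IntegrableOn (fun t => (1 + a + t) ^ (-θ)) (Set.Ioi (0:ℝ)) ∧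
    ∫ t in Set.Ioi (0:ℝ), (1 + a + t) ^ (-θ) = (1 + a) ^ (1 - θ) / (θ - 1) := by
  have hderiv := pareto_aux_deriv θ a hθ ha
  have hpos : ∀ x ∈ Set.Ioi (0:ℝ), (0:ℝ) ≤ (1 + a + x) ^ (-θ) := fun x hx =>
    Real.rpow_nonneg (by have : (0:ℝ) < x := hx; linarith) _
  have htend := pareto_aux_tendsto θ a hθ
  refine ⟨integrableOn_Ioi_deriv_of_nonneg' hderiv hpos htend, ?_⟩
  have := integral_Ioi_of_hasDerivAt_of_nonneg' hderiv hpos htend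
  rw [this]
  simp
  ring

/-- For `X ~ Pa(θ)` with survival function `(1+x)^{−θ}`, `θ > 2`:
`E[X | X > a] = (θ/(θ−1))(1+a) − 1` for all `a ≥ 0`, the unique nonnegative solution of
`2a = E[X | X > a]` is `a = 1/(θ−2)`, and the magnitude-propensity pair `(2a, P(X > a))`
is `(2/(θ−2), ((θ−2)/(θ−1))^θ)`. -/
theorem magnitude_propensity_pareto
    (θ : ℝ) (hθ : 2 < θ) (μ : Measure ℝ) [IsProbabilityMeasure μ]
    (hsurv : ∀ x : ℝ, 0 ≤ x → μ (Set.Ioi x) = ENNReal.ofReal ((1 + x) ^ (-θ))) :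
    (∀ a : ℝ, 0 ≤ a →
      (∫ x in Set.Ioi a, x ∂μ) / (μ (Set.Ioi a)).toReal = θ / (θ - 1) * (1 + a) - 1) ∧
    (∀ a : ℝ, 0 ≤ a →
      (2 * a = (∫ x in Set.Ioi a, x ∂μ) / (μ (Set.Ioi a)).toReal ↔ a = 1 / (θ - 2))) ∧
    (2 * (1 / (θ - 2)) = 2 / (θ - 2) ∧
      μ (Set.Ioi (1 / (θ - 2))) = ENNReal.ofReal (((θ - 2) / (θ - 1)) ^ θ)) := by
  have hθ1 : (0:ℝ) < θ - 1 := by linarith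
  have hθ2 : (0:ℝ) < θ - 2 := by linarith
  have key : ∀ a : ℝ, 0 ≤ a →
      (∫ x in Set.Ioi a, x ∂μ) / (μ (Set.Ioi a)).toReal = θ / (θ - 1) * (1 + a) - 1 := by
    intro a ha
    have hca : (0:ℝ) < 1 + a := by linarith
    set f : ℝ → ℝ := fun x => max (x - a) 0 with hf
    have hfnn : ∀ x, 0 ≤ f x := fun x => le_max_right _ _
    have hfm : Measurable f := (measurable_id.sub_const a).max measurable_const
    -- layer cake
    have hlayer : ∫⁻ x, ENNReal.ofReal (f x) ∂μ
        = ∫⁻ t in Set.Ioi (0:ℝ), μ {x : ℝ | t < f x} :=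
      lintegral_eq_lintegral_meas_lt μ (Filter.Eventually.of_forall hfnn) hfm.aemeasurable
    have hsets : ∀ t ∈ Set.Ioi (0:ℝ), μ {x : ℝ | t < f x}
        = ENNReal.ofReal ((1 + a + t) ^ (-θ)) := by
      intro t ht
      have ht0 : (0:ℝ) < t := ht
      have : {x : ℝ | t < f x} = Set.Ioi (a + t) := by
        ext x
        simp only [Set.mem_setOf_eq, Set.mem_Ioi, hf, lt_max_iff]
        constructor
        · rintro (h | h) <;> linarith
        · intro h; left; linarith
      rw [this, hsurv (a + t) (by linarith)]
      ring_nf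
    have hstep : ∫⁻ t in Set.Ioi (0:ℝ), μ {x : ℝ | t < f x}
        = ∫⁻ t in Set.Ioi (0:ℝ), ENNReal.ofReal ((1 + a + t) ^ (-θ)) :=
      setLIntegral_congr_fun measurableSet_Ioi hsets
    obtain ⟨hint, hval⟩ := pareto_aux_int θ a hθ ha
    have hstep2 : ∫⁻ t in Set.Ioi (0:ℝ), ENNReal.ofReal ((1 + a + t) ^ (-θ))
        = ENNReal.ofReal ((1 + a) ^ (1 - θ) / (θ - 1)) := by
      rw [← ofReal_integral_eq_lintegral_ofReal hint]
      · rw [hval]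
      · filter_upwards [ae_restrict_mem measurableSet_Ioi] with t ht
        exact Real.rpow_nonneg (by have : (0:ℝ) < t := ht; linarith) _
    have hLtot : ∫⁻ x, ENNReal.ofReal (f x) ∂μ
        = ENNReal.ofReal ((1 + a) ^ (1 - θ) / (θ - 1)) := by
      rw [hlayer, hstep, hstep2]
    -- integrability of f
    have hfint : Integrable f μ := by
      refine ⟨hfm.aestronglyMeasurable, ?_⟩
      rw [hasFiniteIntegral_iff_ofReal (Filter.Eventually.of_forall hfnn), hLtot]
      exact ENNReal.ofReal_lt_top
    have hIf : ∫ x, f x ∂μ = (1 + a) ^ (1 - θ) / (θ - 1) := by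
      rw [integral_eq_lintegral_of_nonneg_ae (Filter.Eventually.of_forall hfnn)
        hfm.aestronglyMeasurable, hLtot]
      exact ENNReal.toReal_ofReal (by positivity)
    -- restrict to Ioi a
    have hIf2 : ∫ x in Set.Ioi a, f x ∂μ = ∫ x, f x ∂μ :=
      setIntegral_eq_integral_of_forall_compl_eq_zero (fun x hx => by
        simp only [Set.mem_Ioi, not_lt] at hx
        simp [hf, max_eq_right, sub_nonpos.mpr hx])
    have hfintOn : IntegrableOn f (Set.Ioi a) μ := hfint.integrableOn
    have hidOn : IntegrableOn (fun x => x) (Set.Ioi a) μ := by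
      have : IntegrableOn (fun x => f x + a) (Set.Ioi a) μ :=
        hfintOn.add (integrableOn_const (measure_lt_top _ _).ne)
      refine this.congr_fun (fun x hx => ?_) measurableSet_Ioi
      have hx' : a < x := hx
      simp [hf, max_eq_left (by linarith : (0:ℝ) ≤ x - a)]
    have hsub : ∫ x in Set.Ioi a, f x ∂μ
        = (∫ x in Set.Ioi a, x ∂μ) - a * (μ (Set.Ioi a)).toReal := by
      have : ∫ x in Set.Ioi a, f x ∂μ = ∫ x in Set.Ioi a, (x - a) ∂μ :=
        setIntegral_congr_fun measurableSet_Ioi (fun x hx => by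
          have hx' : a < x := hx
          simp [hf, max_eq_left (by linarith : (0:ℝ) ≤ x - a)])
      rw [this, integral_sub hidOn (integrableOn_const (measure_lt_top _ _).ne)]
      simp [mul_comm, Measure.real]
    have hmeas : (μ (Set.Ioi a)).toReal = (1 + a) ^ (-θ) := by
      rw [hsurv a ha]
      exact ENNReal.toReal_ofReal (Real.rpow_nonneg (le_of_lt hca) _)
    have hnum : ∫ x in Set.Ioi a, x ∂μ
        = (1 + a) ^ (1 - θ) / (θ - 1) + a * (1 + a) ^ (-θ) := by
      have := hsub
      rw [hIf2, hIf, hmeas] at this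
      linarith
    rw [hnum, hmeas]
    have hrp : (1 + a) ^ (1 - θ) = (1 + a) * (1 + a) ^ (-θ) := by
      rw [show (1 - θ) = 1 + (-θ) by ring, Real.rpow_add hca, Real.rpow_one]
    have hne : (1 + a) ^ (-θ) ≠ 0 := ne_of_gt (Real.rpow_pos_of_pos hca _)
    rw [hrp]
    field_simp
    ring
  refine ⟨key, ?_, ?_⟩
  · intro a ha
    rw [key a ha]
    constructor
    · intro h
      have h' : 2 * a * (θ - 1) = θ * (1 + a) - (θ - 1) := by
        field_simp at h
        linarith
      field_simp
      nlinarith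
    · intro h
      subst h
      field_simp
      ring
  · refine ⟨by ring, ?_⟩
    have h2 : (0:ℝ) ≤ 1 / (θ - 2) := by positivity
    rw [hsurv _ h2]
    congr 1
    have hbase : 1 + 1 / (θ - 2) = (θ - 1) / (θ - 2) := by field_simp; ring
    have hx : (0:ℝ) ≤ (θ - 1) / (θ - 2) := by positivity
    rw [hbase, Real.rpow_neg hx, ← Real.inv_rpow hx, inv_div]
end

section
/- Let X ≥ 0 be a random variable with E[X²] < ∞, and define the objective L(m) = E[min(X², (X−m)²)]. If m_X > 0 is a local minimizer of L, then P(X = m_X/2) = 0 and E[(m_X − X)·1_{X > m_X/2}] = 0; equivalently, setting a = m_X/2, one has 2a = E[X | X > a] whenever P(X > a) > 0. -/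
open MeasureTheory Filter Topology

/-- First-order conditions for the constrained two-point quantization: if `m_X > 0` is a
local minimizer of `L(m) = E[min(X², (X−m)²)]`, then `P(X = m_X/2) = 0`,
`E[(m_X − X)·1_{X > m_X/2}] = 0`, and, with `a = m_X/2`, `2a = E[X | X > a]` whenever
`P(X > a) > 0`. -/
theorem local_min_distortion_first_order
    {Ω : Type*} [MeasurableSpace Ω] (P : Measure Ω) [IsProbabilityMeasure P]
    (X : Ω → ℝ) (hXm : Measurable X) (hX0 : ∀ ω, 0 ≤ X ω) (hX2 : MemLp X 2 P)
    (L : ℝ → ℝ)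
    (hL : ∀ m, L m = ∫ ω, min ((X ω) ^ 2) ((X ω - m) ^ 2) ∂P)
    (m_X : ℝ) (hm : 0 < m_X) (hmin : IsLocalMin L m_X) :
    P {ω | X ω = m_X / 2} = 0 ∧
    (∫ ω in {ω | m_X / 2 < X ω}, (m_X - X ω) ∂P) = 0 ∧
    (P {ω | m_X / 2 < X ω} ≠ 0 →
      2 * (m_X / 2) =
        (∫ ω in {ω | m_X / 2 < X ω}, X ω ∂P) / (P {ω | m_X / 2 < X ω}).toReal) := by
  classical
  set a : ℝ := m_X / 2 with ha_def
  have ha : 0 < a := by positivity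
  set S : Set Ω := {ω | a < X ω} with hS_def
  set T : Set Ω := {ω | X ω = a} with hT_def
  set S' : Set Ω := {ω | a ≤ X ω} with hS'_def
  have hSm : MeasurableSet S := measurableSet_lt measurable_const hXm
  have hTm : MeasurableSet T := hXm (measurableSet_singleton a)
  have hS'm : MeasurableSet S' := measurableSet_le measurable_const hXm
  have hX1 : Integrable X P := hX2.integrable one_le_two
  have hX2' : Integrable (fun ω => X ω ^ 2) P := hX2.integrable_sq
  have hsq : ∀ c : ℝ, Integrable (fun ω => (X ω - c) ^ 2) P := by
    intro c
    have : (fun ω => (X ω - c) ^ 2) = fun ω => X ω ^ 2 - (2 * c) * X ω + c ^ 2 := by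
      funext ω; ring
    rw [this]
    exact (hX2'.sub (hX1.const_mul _)).add (integrable_const _)
  have hmin_meas : ∀ c : ℝ, Measurable (fun ω => min (X ω ^ 2) ((X ω - c) ^ 2)) :=
    fun c => (hXm.pow_const 2).min ((hXm.sub measurable_const).pow_const 2)
  have hmin_int : ∀ c : ℝ, Integrable (fun ω => min (X ω ^ 2) ((X ω - c) ^ 2)) P := by
    intro c
    refine (hX2'.add (hsq c)).mono ((hmin_meas c).aestronglyMeasurable)
      (Filter.Eventually.of_forall fun ω => ?_)
    simp only [Pi.add_apply]
    have h0 : (0:ℝ) ≤ min (X ω ^ 2) ((X ω - c) ^ 2) := le_min (sq_nonneg _) (sq_nonneg _)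
    rw [Real.norm_eq_abs, Real.norm_eq_abs, abs_of_nonneg h0, abs_of_nonneg (by positivity)]
    exact le_trans (min_le_left _ _) (by nlinarith [sq_nonneg (X ω - c)])
  obtain ⟨ε, hε, hball⟩ := Metric.eventually_nhds_iff.mp hmin
  set J : ℝ := ∫ ω in S, (X ω - m_X) ∂P with hJ_def
  set K : ℝ := ∫ ω in S', (X ω - m_X) ∂P with hK_def
  have hXmS : IntegrableOn (fun ω => X ω - m_X) S P := (hX1.sub (integrable_const _)).integrableOn
  have hXmS' : IntegrableOn (fun ω => X ω - m_X) S' P := (hX1.sub (integrable_const _)).integrableOn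
  have hXmT : IntegrableOn (fun ω => X ω - m_X) T P := (hX1.sub (integrable_const _)).integrableOn
  -- right directional derivative: J ≤ 0
  have hJle : J ≤ 0 := by
    have key : ∀ h ∈ Set.Ioo (0:ℝ) ε, 2 * J ≤ h * (P S).toReal := by
      rintro h ⟨hh0, hhε⟩
      have hLle : L m_X ≤ L (m_X + h) := by
        apply hball
        rw [Real.dist_eq]
        simpa [abs_of_pos hh0] using hhε
      have hptw : ∀ ω, min (X ω ^ 2) ((X ω - (m_X + h)) ^ 2) - min (X ω ^ 2) ((X ω - m_X) ^ 2)
          ≤ S.indicator (fun ω => h ^ 2 - 2 * h * (X ω - m_X)) ω := by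
        intro ω
        by_cases hω : ω ∈ S
        · rw [Set.indicator_of_mem hω]
          have hx : a < X ω := hω
          have h2 : min (X ω ^ 2) ((X ω - m_X) ^ 2) = (X ω - m_X) ^ 2 :=
            min_eq_right (by nlinarith)
          have h1 : min (X ω ^ 2) ((X ω - (m_X + h)) ^ 2) ≤ (X ω - (m_X + h)) ^ 2 :=
            min_le_right _ _
          rw [h2]; nlinarith [h1]
        · rw [Set.indicator_of_notMem hω]
          have hx : X ω ≤ a := not_lt.mp hω
          have h2 : min (X ω ^ 2) ((X ω - m_X) ^ 2) = X ω ^ 2 :=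
            min_eq_left (by nlinarith)
          have h1 : min (X ω ^ 2) ((X ω - (m_X + h)) ^ 2) ≤ X ω ^ 2 := min_le_left _ _
          linarith
      have hint_ind : Integrable (S.indicator fun ω => h ^ 2 - 2 * h * (X ω - m_X)) P :=
        ((integrable_const _).sub ((hX1.sub (integrable_const _)).const_mul (2 * h))).indicator hSm
      have hIle := integral_mono ((hmin_int _).sub (hmin_int _)) hint_ind hptw
      simp only [Pi.sub_apply] at hIle
      rw [integral_sub (hmin_int _) (hmin_int _), integral_indicator hSm] at hIle
      have hRHS : ∫ ω in S, (h ^ 2 - 2 * h * (X ω - m_X)) ∂P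
          = h ^ 2 * (P S).toReal - 2 * h * J := by
        rw [integral_sub (integrableOn_const (C := h ^ 2) (measure_ne_top _ _))
          (hXmS.const_mul _), setIntegral_const, measureReal_def, integral_const_mul, ← hJ_def, smul_eq_mul]
        ring
      rw [hRHS] at hIle
      have h0le : 0 ≤ h ^ 2 * (P S).toReal - 2 * h * J := by
        have := hL m_X; have := hL (m_X + h); linarith
      have : h * (2 * J) ≤ h * (h * (P S).toReal) := by nlinarith
      exact le_of_mul_le_mul_left this hh0
    have htend : Tendsto (fun h : ℝ => h * (P S).toReal) (𝓝[>] (0:ℝ)) (𝓝 0) := by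
      have : Tendsto (fun h : ℝ => h * (P S).toReal) (𝓝 (0:ℝ))
          (𝓝 (0 * (P S).toReal)) := (continuous_id.mul continuous_const).tendsto 0
      simpa using this.mono_left nhdsWithin_le_nhds
    have hev : ∀ᶠ h in 𝓝[>] (0:ℝ), 2 * J ≤ h * (P S).toReal :=
      Filter.eventually_of_mem (Ioo_mem_nhdsGT_of_mem ⟨le_refl 0, hε⟩) key
    have := ge_of_tendsto htend hev
    linarith
  -- left directional derivative: 0 ≤ K
  have hKge : 0 ≤ K := by
    have key : ∀ h ∈ Set.Ioo (0:ℝ) ε, -(2 * K) ≤ h * (P S').toReal := by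
      rintro h ⟨hh0, hhε⟩
      have hLle : L m_X ≤ L (m_X - h) := by
        apply hball
        rw [Real.dist_eq]
        rw [show m_X - h - m_X = -h by ring]
        simpa [abs_of_pos hh0] using hhε
      have hptw : ∀ ω, min (X ω ^ 2) ((X ω - (m_X - h)) ^ 2) - min (X ω ^ 2) ((X ω - m_X) ^ 2)
          ≤ S'.indicator (fun ω => h ^ 2 + 2 * h * (X ω - m_X)) ω := by
        intro ω
        by_cases hω : ω ∈ S'
        · rw [Set.indicator_of_mem hω]
          have hx : a ≤ X ω := hω
          have h2 : min (X ω ^ 2) ((X ω - m_X) ^ 2) = (X ω - m_X) ^ 2 :=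
            min_eq_right (by nlinarith)
          have h1 : min (X ω ^ 2) ((X ω - (m_X - h)) ^ 2) ≤ (X ω - (m_X - h)) ^ 2 :=
            min_le_right _ _
          rw [h2]; nlinarith [h1]
        · rw [Set.indicator_of_notMem hω]
          have hx : X ω < a := not_le.mp hω
          have h2 : min (X ω ^ 2) ((X ω - m_X) ^ 2) = X ω ^ 2 :=
            min_eq_left (by nlinarith)
          have h1 : min (X ω ^ 2) ((X ω - (m_X - h)) ^ 2) ≤ X ω ^ 2 := min_le_left _ _
          linarith
      have hint_ind : Integrable (S'.indicator fun ω => h ^ 2 + 2 * h * (X ω - m_X)) P :=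
        ((integrable_const _).add ((hX1.sub (integrable_const _)).const_mul (2 * h))).indicator hS'm
      have hIle := integral_mono ((hmin_int _).sub (hmin_int _)) hint_ind hptw
      simp only [Pi.sub_apply] at hIle
      rw [integral_sub (hmin_int _) (hmin_int _), integral_indicator hS'm] at hIle
      have hRHS : ∫ ω in S', (h ^ 2 + 2 * h * (X ω - m_X)) ∂P
          = h ^ 2 * (P S').toReal + 2 * h * K := by
        rw [integral_add (integrableOn_const (C := h ^ 2) (measure_ne_top _ _))
          (hXmS'.const_mul _), setIntegral_const, measureReal_def, integral_const_mul, ← hK_def, smul_eq_mul]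
        ring
      rw [hRHS] at hIle
      have h0le : 0 ≤ h ^ 2 * (P S').toReal + 2 * h * K := by
        have := hL m_X; have := hL (m_X - h); linarith
      have : h * (-(2 * K)) ≤ h * (h * (P S').toReal) := by nlinarith
      exact le_of_mul_le_mul_left this hh0
    have htend : Tendsto (fun h : ℝ => h * (P S').toReal) (𝓝[>] (0:ℝ)) (𝓝 0) := by
      have : Tendsto (fun h : ℝ => h * (P S').toReal) (𝓝 (0:ℝ))
          (𝓝 (0 * (P S').toReal)) := (continuous_id.mul continuous_const).tendsto 0
      simpa using this.mono_left nhdsWithin_le_nhds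
    have hev : ∀ᶠ h in 𝓝[>] (0:ℝ), -(2 * K) ≤ h * (P S').toReal :=
      Filter.eventually_of_mem (Ioo_mem_nhdsGT_of_mem ⟨le_refl 0, hε⟩) key
    have := ge_of_tendsto htend hev
    linarith
  -- decomposition K = J + (a - m_X) * P(T)
  have hunion : S' = S ∪ T := by
    ext ω
    simp only [hS'_def, hS_def, hT_def, Set.mem_setOf_eq, Set.mem_union]
    constructor
    · intro hle
      rcases lt_or_eq_of_le hle with h | h
      · exact Or.inl h
      · exact Or.inr h.symm
    · rintro (h | h)
      · exact le_of_lt h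
      · exact le_of_eq h.symm
  have hdisj : Disjoint S T := by
    rw [Set.disjoint_left]
    intro ω h1 h2
    simp only [hS_def, hT_def, Set.mem_setOf_eq] at h1 h2
    exact absurd h2 (ne_of_gt h1)
  have hTint : ∫ ω in T, (X ω - m_X) ∂P = (a - m_X) * (P T).toReal := by
    rw [setIntegral_congr_fun hTm (g := fun _ => a - m_X) (fun ω hω => by
      simp only [hT_def, Set.mem_setOf_eq] at hω; rw [hω]),
      setIntegral_const, measureReal_def, smul_eq_mul, mul_comm]
  have hdecomp : K = J + (a - m_X) * (P T).toReal := by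
    rw [hK_def, hunion, setIntegral_union hdisj hTm hXmS hXmT, hTint]
  have hamx : a - m_X = -a := by rw [ha_def]; ring
  have hTnn : 0 ≤ (P T).toReal := ENNReal.toReal_nonneg
  have hJ0 : J = 0 := by
    rw [hdecomp, hamx] at hKge
    nlinarith
  have hT0 : (P T).toReal = 0 := by
    rw [hdecomp, hamx, hJ0] at hKge
    nlinarith
  have hPT : P T = 0 := by
    rcases (ENNReal.toReal_eq_zero_iff _).mp hT0 with h | h
    · exact h
    · exact absurd h (measure_ne_top _ _)
  refine ⟨hPT, ?_, ?_⟩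
  · have : (fun ω => m_X - X ω) = fun ω => -(X ω - m_X) := by funext ω; ring
    rw [this, integral_neg, ← hJ_def, hJ0, neg_zero]
  · intro hPS
    have hμS : (P S).toReal ≠ 0 := by
      rw [ENNReal.toReal_ne_zero]
      exact ⟨hPS, measure_ne_top _ _⟩
    have hsplit : ∫ ω in S, (X ω - m_X) ∂P
        = (∫ ω in S, X ω ∂P) - m_X * (P S).toReal := by
      rw [integral_sub hX1.integrableOn (integrableOn_const (measure_ne_top _ _)),
        setIntegral_const, measureReal_def, smul_eq_mul, mul_comm]
    rw [← hJ_def, hJ0] at hsplit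
    have hint : ∫ ω in S, X ω ∂P = m_X * (P S).toReal := by linarith
    rw [hint]
    field_simp
    rw [ha_def]
    ring
end

section
/- Let X ≥ 0 be integrable with continuous distribution function F and density f continuous at a point a = Q(1−p) with f(a) > 0, and suppose (m, p) with m = 2a satisfies the first-order conditions m = 2Q(1−p) and m p = ∫_{1−p}^1 Q(t)dt. If additionally a f(a) < 2(1 − F(a)), then the Hessian of ψ(m,p) = E[X²] + m²p − 2m∫_{1−p}^1 Q(t)dt at (m,p) is positive definite, so (m,p) is a strict local minimum. -/
open MeasureTheory

set_option maxHeartbeats 1000000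

theorem quad_pos {A B C u v : ℝ} (hA : 0 < A) (hdet : B^2 < 4*A*C)
    (hne : u ≠ 0 ∨ v ≠ 0) : 0 < A*u^2 + B*u*v + C*v^2 := by
  rcases eq_or_ne v 0 with hv | hv
  · subst hv
    rcases hne with hu | hu
    · have : 0 < u^2 := by positivity
      nlinarith
    · simp at hu
  · have hv2 : 0 < v^2 := by positivity
    nlinarith [sq_nonneg (2*A*u + B*v)]

theorem posdef_fin_two {A B C : ℝ} (hA : 0 < A) (hdet : B^2 < A*C) :
    Matrix.PosDef !![A, B; B, C] := by
  constructor
  · rw [Matrix.IsHermitian, Matrix.conjTranspose_eq_transpose_of_trivial]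
    ext i j
    fin_cases i <;> fin_cases j <;> rfl
  · intro x hx
    have hne : x 0 ≠ 0 ∨ x 1 ≠ 0 := by
      by_contra h
      push_neg at h
      apply hx
      ext i
      fin_cases i
      · exact h.1
      · exact h.2
    simp [Matrix.mulVec, dotProduct, Finsupp.sum_fintype, Fin.sum_univ_two]
    nlinarith [quad_pos hA (show (2*B)^2 < 4*A*C by nlinarith) hne]

/-- Second-order sufficiency: at a critical point `(m,p)` of
`ψ(m,p) = E[X²] + m²p − 2m∫_{1−p}^1 Q(t)dt` with `a = Q(1−p)`, `m = 2a`, if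
`a f(a) < 2(1 − F(a))`, then the Hessian of `ψ` at `(m,p)` is positive definite and
`(m,p)` is a strict local minimum of `ψ`. -/
theorem hessian_posdef_strict_local_min
    (μ : Measure ℝ) [IsProbabilityMeasure μ]
    (f : ℝ → ℝ) (hf0 : ∀ x, 0 ≤ f x)
    (hdens : μ = volume.withDensity (fun x => ENNReal.ofReal (f x)))
    (hsupp : μ (Set.Iio 0) = 0)
    (hX2 : Integrable (fun x : ℝ => x ^ 2) μ)
    (F : ℝ → ℝ) (hF : ∀ x, F x = (μ (Set.Iic x)).toReal) (hFc : Continuous F)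
    (Q : ℝ → ℝ)
    (hQ : ∀ t ∈ Set.Ioo (0 : ℝ) 1,
      Q t = sInf {x : ℝ | ENNReal.ofReal t ≤ μ (Set.Iic x)})
    (ψ : ℝ → ℝ → ℝ)
    (hψ : ∀ m' p', ψ m' p' =
      (∫ x, x ^ 2 ∂μ) + m' ^ 2 * p' - 2 * m' * ∫ t in (1 - p')..1, Q t)
    (a m p : ℝ) (hp : p ∈ Set.Ioo (0 : ℝ) 1)
    (ha : a = Q (1 - p)) (hfc : ContinuousAt f a) (hfa : 0 < f a)
    (hm : m = 2 * a)
    (hfoc : m * p = ∫ t in (1 - p)..1, Q t)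
    (hcond : a * f a < 2 * (1 - F a)) :
    (Matrix.PosDef
      !![2 * p, 2 * (m - Q (1 - p));
         2 * (m - Q (1 - p)), 2 * m / f (Q (1 - p))]) ∧
    ∃ ε > 0, ∀ z : ℝ × ℝ, z ∈ Metric.ball (m, p) ε → z ≠ (m, p) →
      ψ m p < ψ z.1 z.2 := by
  obtain ⟨hp0, hp1⟩ := hp
  set b := f a with hbdef
  have hbpos : 0 < b := hfa
  -- basic facts about F
  have hμfin : ∀ x : ℝ, μ (Set.Iic x) ≠ ⊤ := fun x => (measure_lt_top μ _).ne
  have hF0 : ∀ x, 0 ≤ F x := fun x => by rw [hF]; exact ENNReal.toReal_nonneg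
  have hFofReal : ∀ x, ENNReal.ofReal (F x) = μ (Set.Iic x) := fun x => by
    rw [hF, ENNReal.ofReal_toReal (hμfin x)]
  have hSmem : ∀ t x : ℝ, (ENNReal.ofReal t ≤ μ (Set.Iic x) ↔ t ≤ F x) := by
    intro t x
    rw [← hFofReal x, ENNReal.ofReal_le_ofReal_iff (hF0 x)]
  have hFmono : Monotone F := by
    intro x y hxy
    rw [hF, hF]
    exact ENNReal.toReal_mono (hμfin y) (measure_mono (Set.Iic_subset_Iic.2 hxy))
  have hFdiff : ∀ x₁ x₂ : ℝ, x₁ ≤ x₂ → F x₂ - F x₁ = (μ (Set.Ioc x₁ x₂)).toReal := by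
    intro x₁ x₂ h
    have hun : μ (Set.Iic x₁) + μ (Set.Ioc x₁ x₂) = μ (Set.Iic x₂) := by
      rw [← measure_union (Set.Iic_disjoint_Ioc le_rfl) measurableSet_Ioc,
        Set.Iic_union_Ioc_eq_Iic h]
    rw [hF, hF, ← hun, ENNReal.toReal_add (hμfin _) (measure_lt_top μ _).ne]
    ring
  have hμIoc : ∀ x₁ x₂ : ℝ, μ (Set.Ioc x₁ x₂)
      = ∫⁻ x in Set.Ioc x₁ x₂, ENNReal.ofReal (f x) := by
    intro x₁ x₂
    rw [hdens]
    exact withDensity_apply _ measurableSet_Ioc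
  -- lower and upper bounds on increments of F from density bounds
  have hFlow : ∀ c x₁ x₂ : ℝ, 0 ≤ c → x₁ ≤ x₂ → (∀ x ∈ Set.Ioc x₁ x₂, c ≤ f x) →
      c * (x₂ - x₁) ≤ F x₂ - F x₁ := by
    intro c x₁ x₂ hc h hcf
    rw [hFdiff _ _ h]
    have h1 : ENNReal.ofReal c * volume (Set.Ioc x₁ x₂) ≤ μ (Set.Ioc x₁ x₂) := by
      rw [hμIoc, ← setLIntegral_const]
      exact setLIntegral_mono' measurableSet_Ioc
        (fun x hx => ENNReal.ofReal_le_ofReal (hcf x hx))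
    calc c * (x₂ - x₁)
        = (ENNReal.ofReal c * volume (Set.Ioc x₁ x₂)).toReal := by
          rw [Real.volume_Ioc, ← ENNReal.ofReal_mul hc,
            ENNReal.toReal_ofReal (mul_nonneg hc (by linarith))]
      _ ≤ (μ (Set.Ioc x₁ x₂)).toReal := ENNReal.toReal_mono (measure_lt_top μ _).ne h1
  have hFupp : ∀ C x₁ x₂ : ℝ, x₁ ≤ x₂ → (∀ x ∈ Set.Ioc x₁ x₂, f x ≤ C) →
      F x₂ - F x₁ ≤ C * (x₂ - x₁) := by
    intro C x₁ x₂ h hcf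
    rcases eq_or_lt_of_le h with rfl | hlt
    · simp
    have hC : 0 ≤ C := le_trans (hf0 x₂) (hcf x₂ ⟨hlt, le_rfl⟩)
    rw [hFdiff _ _ h]
    have h1 : μ (Set.Ioc x₁ x₂) ≤ ENNReal.ofReal C * volume (Set.Ioc x₁ x₂) := by
      rw [hμIoc, ← setLIntegral_const]
      exact setLIntegral_mono' measurableSet_Ioc
        (fun x hx => ENNReal.ofReal_le_ofReal (hcf x hx))
    calc (μ (Set.Ioc x₁ x₂)).toReal
        ≤ (ENNReal.ofReal C * volume (Set.Ioc x₁ x₂)).toReal := by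
          apply ENNReal.toReal_mono _ h1
          rw [Real.volume_Ioc]
          exact (ENNReal.ofReal_mul hC ▸ ENNReal.ofReal_ne_top)
      _ = C * (x₂ - x₁) := by
          rw [Real.volume_Ioc, ← ENNReal.ofReal_mul hC,
            ENNReal.toReal_ofReal (mul_nonneg hC (by linarith))]
  -- Chebyshev tail bound
  set M2 : ℝ := ∫ x, x ^ 2 ∂μ with hM2def
  have hM2nonneg : 0 ≤ M2 := integral_nonneg (fun x => sq_nonneg x)
  have hcheb : ∀ t ∈ Set.Ioo (0:ℝ) 1, t ≤ F (Real.sqrt ((M2+1)/(1-t))) := by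
    intro t ht
    have h1t : 0 < 1 - t := by linarith [ht.2]
    set x₀ := Real.sqrt ((M2+1)/(1-t)) with hx₀def
    have hx₀pos : 0 < x₀ := Real.sqrt_pos.2 (by positivity)
    have hx₀sq : x₀^2 = (M2+1)/(1-t) := Real.sq_sqrt (by positivity)
    have hmk := mul_meas_ge_le_integral_of_nonneg (μ := μ)
      (ae_of_all μ fun x => sq_nonneg x) hX2 (x₀^2)
    have hsub : Set.Ioi x₀ ⊆ {x : ℝ | x₀^2 ≤ x^2} := by
      intro x hx
      have hx' : x₀ < x := hx
      have : 0 ≤ x₀ := hx₀pos.le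
      simp only [Set.mem_setOf_eq]
      nlinarith
    have hmono : (μ (Set.Ioi x₀)).toReal ≤ (μ {x : ℝ | x₀^2 ≤ x^2}).toReal :=
      ENNReal.toReal_mono (measure_lt_top μ _).ne (measure_mono hsub)
    have hIoi : x₀^2 * (μ (Set.Ioi x₀)).toReal ≤ M2 := by
      calc x₀^2 * (μ (Set.Ioi x₀)).toReal
          ≤ x₀^2 * (μ {x : ℝ | x₀^2 ≤ x^2}).toReal :=
            mul_le_mul_of_nonneg_left hmono (by positivity)
        _ ≤ M2 := hmk
    have hsplit : μ (Set.Iic x₀) + μ (Set.Ioi x₀) = 1 := by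
      rw [← measure_union (Set.Iic_disjoint_Ioi le_rfl) measurableSet_Ioi,
        Set.Iic_union_Ioi, measure_univ]
    have hFx₀ : F x₀ = 1 - (μ (Set.Ioi x₀)).toReal := by
      rw [hF]
      have := ENNReal.toReal_add (hμfin x₀) (measure_lt_top μ (Set.Ioi x₀)).ne
      rw [hsplit] at this
      simp at this
      linarith
    rw [hFx₀]
    have hkey : (μ (Set.Ioi x₀)).toReal ≤ 1 - t := by
      have hx₀sq' : 0 < x₀^2 := by positivity
      have h1 : (μ (Set.Ioi x₀)).toReal ≤ M2 / x₀^2 := by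
        rw [le_div_iff₀ hx₀sq']
        linarith [hIoi, mul_comm (x₀^2) ((μ (Set.Ioi x₀)).toReal)]
      have h2 : M2 / x₀^2 ≤ 1 - t := by
        rw [hx₀sq, div_div_eq_mul_div, div_le_iff₀ (by positivity : (0:ℝ) < M2+1)]
        nlinarith [h1t, hM2nonneg]
      linarith
    linarith
  -- quantile API
  have hSlb : ∀ t : ℝ, 0 < t → ∀ x ∈ {x : ℝ | ENNReal.ofReal t ≤ μ (Set.Iic x)},
      (0:ℝ) ≤ x := by
    intro t ht x hx
    by_contra hx0
    push_neg at hx0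
    have h0 : μ (Set.Iic x) = 0 :=
      measure_mono_null (Set.Iic_subset_Iio.2 hx0) hsupp
    rw [Set.mem_setOf_eq, h0, nonpos_iff_eq_zero, ENNReal.ofReal_eq_zero] at hx
    linarith
  have hSbdd : ∀ t : ℝ, 0 < t →
      BddBelow {x : ℝ | ENNReal.ofReal t ≤ μ (Set.Iic x)} :=
    fun t ht => ⟨0, fun x hx => hSlb t ht x hx⟩
  have hSne : ∀ t ∈ Set.Ioo (0:ℝ) 1,
      Set.Nonempty {x : ℝ | ENNReal.ofReal t ≤ μ (Set.Iic x)} := by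
    intro t ht
    exact ⟨Real.sqrt ((M2+1)/(1-t)), (hSmem t _).2 (hcheb t ht)⟩
  have hQle : ∀ t ∈ Set.Ioo (0:ℝ) 1, ∀ x : ℝ, t ≤ F x → Q t ≤ x := by
    intro t ht x hx
    rw [hQ t ht]
    exact csInf_le (hSbdd t ht.1) ((hSmem t x).2 hx)
  have hQge : ∀ t ∈ Set.Ioo (0:ℝ) 1, ∀ c : ℝ, (∀ x : ℝ, x < c → F x < t) →
      c ≤ Q t := by
    intro t ht c hc
    rw [hQ t ht]
    apply le_csInf (hSne t ht)
    intro y hy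
    by_contra hyc
    push_neg at hyc
    exact absurd ((hSmem t y).1 hy) (not_le.2 (hc y hyc))
  have hQnonneg : ∀ t ∈ Set.Ioo (0:ℝ) 1, 0 ≤ Q t := by
    intro t ht
    rw [hQ t ht]
    exact le_csInf (hSne t ht) (fun x hx => hSlb t ht.1 x hx)
  have hQmono : MonotoneOn Q (Set.Ioo (0:ℝ) 1) := by
    intro t₁ h₁ t₂ h₂ h12
    rw [hQ t₁ h₁, hQ t₂ h₂]
    exact csInf_le_csInf (hSbdd t₁ h₁.1) (hSne t₂ h₂)
      (fun x hx => le_trans (ENNReal.ofReal_le_ofReal h12) hx)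
  have hQF : ∀ t ∈ Set.Ioo (0:ℝ) 1, t ≤ F (Q t) := by
    intro t ht
    have hclosed : IsClosed {x : ℝ | ENNReal.ofReal t ≤ μ (Set.Iic x)} := by
      have : {x : ℝ | ENNReal.ofReal t ≤ μ (Set.Iic x)} = F ⁻¹' (Set.Ici t) := by
        ext x
        simp [hSmem t x, Set.mem_preimage]
      rw [this]
      exact isClosed_Ici.preimage hFc
    have hmem := hclosed.csInf_mem (hSne t ht) (hSbdd t ht.1)
    rw [hQ t ht]
    exact (hSmem t _).1 hmem
  have hQub : ∀ t ∈ Set.Ioo (0:ℝ) 1, Q t ≤ Real.sqrt ((M2+1)/(1-t)) :=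
    fun t ht => hQle t ht _ (hcheb t ht)
  have ht1p : (1 - p) ∈ Set.Ioo (0:ℝ) 1 := ⟨by linarith, by linarith⟩
  -- F a = 1 - p
  have haQ : F a = 1 - p := by
    have h1 : 1 - p ≤ F a := by rw [ha]; exact hQF _ ht1p
    have h2 : F a ≤ 1 - p := by
      by_contra h
      push_neg at h
      have hev : F ⁻¹' (Set.Ioi (1-p)) ∈ nhds a :=
        hFc.continuousAt (Ioi_mem_nhds h)
      obtain ⟨ε, hεpos, hball⟩ := Metric.mem_nhds_iff.1 hev
      have hmem : a - ε/2 ∈ Metric.ball a ε := by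
        rw [Metric.mem_ball, Real.dist_eq]
        rw [abs_of_nonpos (by linarith)]
        linarith
      have hFx : 1 - p ≤ F (a - ε/2) := le_of_lt (hball hmem)
      have := hQle _ ht1p _ hFx
      rw [← ha] at this
      linarith
    linarith
  have hab2p : a * b < 2 * p := by rw [haQ] at hcond; linarith
  have ha0 : 0 ≤ a := by rw [ha]; exact hQnonneg _ ht1p
  -- density control near a
  set θ : ℝ := min (b/2) ((2*p - a*b)/(4*a+1)) with hθdef
  have hθpos : 0 < θ := lt_min (by positivity) (by
    apply div_pos (by linarith) (by positivity))
  have hθb : θ ≤ b/2 := min_le_left _ _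
  have hθ2 : θ ≤ (2*p - a*b)/(4*a+1) := min_le_right _ _
  obtain ⟨η, hηpos, hη⟩ : ∃ η > 0, ∀ x : ℝ, |x - a| ≤ η → b - θ < f x ∧ f x < b + θ := by
    obtain ⟨δ, hδpos, hδ⟩ := Metric.continuousAt_iff.1 hfc θ hθpos
    refine ⟨δ/2, by positivity, fun x hx => ?_⟩
    have := hδ (show dist x a < δ by rw [Real.dist_eq]; linarith)
    rw [Real.dist_eq, abs_sub_lt_iff] at this
    constructor <;> linarith [this.1, this.2]
  set K₂ : ℝ := 1/(b+2*θ) with hK₂def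
  have hbθpos : 0 < b + 2*θ := by linarith
  have hK₂pos : 0 < K₂ := by positivity
  have hK₂b : K₂ ≤ 1/b := by
    rw [hK₂def]
    apply one_div_le_one_div_of_le hbpos
    linarith
  set s₀ : ℝ := b*η/4 with hs₀def
  have hs₀pos : 0 < s₀ := by positivity
  have hK₂s : ∀ s : ℝ, 0 ≤ s → s ≤ s₀ → K₂ * s ≤ η/4 := by
    intro s hs0 hss
    calc K₂ * s ≤ (1/b) * s := by nlinarith
      _ ≤ (1/b) * s₀ := by
          apply mul_le_mul_of_nonneg_left hss (by positivity)
      _ = η/4 := by rw [hs₀def]; field_simp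
  have hbθK₂ : (b+θ)*K₂ < 1 := by
    rw [hK₂def, mul_one_div]
    rw [div_lt_one hbθpos]
    linarith
  -- upper bound on Q below 1-p
  have hQup : ∀ s : ℝ, 0 ≤ s → s ≤ s₀ → s < 1 - p → Q (1-p-s) ≤ a - K₂*s := by
    intro s hs0 hss hs1p
    have ht : (1-p-s) ∈ Set.Ioo (0:ℝ) 1 := ⟨by linarith, by linarith⟩
    apply hQle _ ht
    have hK₂sη := hK₂s s hs0 hss
    have hK₂s0 : 0 ≤ K₂*s := mul_nonneg hK₂pos.le hs0
    have hupp := hFupp (b+θ) (a - K₂*s) a (by linarith) (by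
      intro x hx
      have h1 : a - K₂*s < x := hx.1
      have h2 : x ≤ a := hx.2
      have : |x - a| ≤ η := by
        rw [abs_of_nonpos (by linarith)]
        linarith
      exact (hη x this).2.le)
    have hbound : (b+θ)*(a - (a - K₂*s)) ≤ s := by
      calc (b+θ)*(a - (a - K₂*s)) = ((b+θ)*K₂)*s := by ring
        _ ≤ 1*s := mul_le_mul_of_nonneg_right hbθK₂.le hs0
        _ = s := one_mul s
    rw [haQ] at hupp
    linarith
  -- lower bound on Q above 1-p
  have hQlo : ∀ s : ℝ, 0 ≤ s → s ≤ s₀ → s < p → a + K₂*s ≤ Q (1-p+s) := by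
    intro s hs0 hss hsp
    rcases eq_or_lt_of_le hs0 with rfl | hs0'
    · simpa using ha.le
    have ht : (1-p+s) ∈ Set.Ioo (0:ℝ) 1 := ⟨by linarith, by linarith⟩
    apply hQge _ ht
    intro x hx
    rcases le_or_gt x a with hxa | hxa
    · have := hFmono hxa
      rw [haQ] at this
      linarith
    · have hK₂sη := hK₂s s hs0 hss
      have hupp := hFupp (b+θ) a x hxa.le (by
        intro y hy
        have h1 : a < y := hy.1
        have h2 : y ≤ x := hy.2
        have : |y - a| ≤ η := by
          rw [abs_of_nonneg (by linarith)]
          linarith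
        exact (hη y this).2.le)
      rw [haQ] at hupp
      have h4 : (b+θ)*(x - a) ≤ (b+θ)*(K₂*s) :=
        mul_le_mul_of_nonneg_left (by linarith) (by linarith)
      have h5 : ((b+θ)*K₂)*s < 1*s := mul_lt_mul_of_pos_right hbθK₂ hs0'
      have h6 : (b+θ)*(K₂*s) = ((b+θ)*K₂)*s := by ring
      linarith
  -- integrability of Q on (1-p, 1)
  have hQuIcc : ∀ c d : ℝ, c ∈ Set.Ioo (0:ℝ) 1 → d ∈ Set.Ioo (0:ℝ) 1 →
      IntervalIntegrable Q volume c d := by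
    intro c d hc hd
    apply MonotoneOn.intervalIntegrable
    apply hQmono.mono
    intro x hx
    rw [Set.mem_uIcc] at hx
    constructor
    · rcases hx with hx | hx
      · exact lt_of_lt_of_le hc.1 hx.1
      · exact lt_of_lt_of_le hd.1 hx.1
    · rcases hx with hx | hx
      · exact lt_of_le_of_lt hx.2 hd.2
      · exact lt_of_le_of_lt hx.2 hc.2
  have hQint1 : IntervalIntegrable Q volume (1-p) 1 := by
    rw [intervalIntegrable_iff_integrableOn_Ioc_of_le (by linarith)]
    rw [integrableOn_Ioc_iff_integrableOn_Ioo]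
    set Cb : ℝ := Real.sqrt (M2+1) with hCbdef
    have hg : IntegrableOn (fun t : ℝ => Cb * (1-t) ^ (-(1/2) : ℝ))
        (Set.Ioo (1-p) 1) volume := by
      have h1 : IntervalIntegrable (fun x : ℝ => x ^ (-(1/2) : ℝ)) volume 0 p :=
        intervalIntegral.intervalIntegrable_rpow' (by norm_num)
      have h2 := (h1.comp_sub_left 1).const_mul Cb
      simp only [sub_zero] at h2
      have h3 := h2.symm
      rw [intervalIntegrable_iff_integrableOn_Ioc_of_le (by linarith)] at h3
      exact h3.mono_set Set.Ioo_subset_Ioc_self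
    apply Integrable.mono hg
    · exact (aemeasurable_restrict_of_monotoneOn measurableSet_Ioo
        (hQmono.mono (fun x hx => ⟨by linarith [hx.1], hx.2⟩))).aestronglyMeasurable
    · rw [ae_restrict_iff' measurableSet_Ioo]
      filter_upwards with t ht
      have ht' : t ∈ Set.Ioo (0:ℝ) 1 := ⟨by linarith [ht.1], ht.2⟩
      have h1t : 0 < 1 - t := by linarith [ht'.2]
      have hQt : 0 ≤ Q t := hQnonneg t ht'
      rw [Real.norm_eq_abs, Real.norm_eq_abs, abs_of_nonneg hQt]
      have heq : Real.sqrt ((M2+1)/(1-t)) = Cb * (1-t) ^ (-(1/2) : ℝ) := by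
        rw [Real.rpow_neg h1t.le, ← Real.sqrt_eq_rpow,
          Real.sqrt_div (by positivity : (0:ℝ) ≤ M2+1), div_eq_mul_inv]
      calc Q t ≤ Real.sqrt ((M2+1)/(1-t)) := hQub t ht'
        _ = Cb * (1-t) ^ (-(1/2) : ℝ) := heq
        _ ≤ |Cb * (1-t) ^ (-(1/2) : ℝ)| := le_abs_self _
  -- helper: integral of linear functions
  have hlinint : ∀ (K c d e : ℝ), (∫ t in c..d, K*(t-e))
      = K*((d^2-c^2)/2 - e*(d-c)) := by
    intro K c d e
    rw [intervalIntegral.integral_const_mul,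
      intervalIntegral.integral_sub (continuous_id'.intervalIntegrable _ _)
        (intervalIntegrable_const),
      integral_id, intervalIntegral.integral_const]
    simp only [smul_eq_mul]
    ring
  -- positivity of a
  have hapos : 0 < a := by
    rcases ha0.lt_or_eq with h | h
    · exact h
    exfalso
    have ham : m = 0 := by rw [hm, ← h]; ring
    set σ : ℝ := min s₀ (p/2) with hσdef
    have hσpos : 0 < σ := lt_min hs₀pos (by linarith)
    have hσs₀ : σ ≤ s₀ := min_le_left _ _
    have hσp : σ < p := lt_of_le_of_lt (min_le_right _ _) (by linarith)
    have hτ : (1-p+σ) ∈ Set.Ioo (0:ℝ) 1 := ⟨by linarith, by linarith⟩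
    have hint1 : IntervalIntegrable Q volume (1-p) (1-p+σ) := hQuIcc _ _ ht1p hτ
    have hint2 : IntervalIntegrable Q volume (1-p+σ) 1 :=
      hQint1.mono_set (by
        rw [Set.uIcc_of_le (by linarith : (1:ℝ)-p+σ ≤ 1),
          Set.uIcc_of_le (by linarith : (1:ℝ)-p ≤ 1)]
        exact Set.Icc_subset_Icc (by linarith) le_rfl)
    have hsplit := intervalIntegral.integral_add_adjacent_intervals hint1 hint2
    have hlow1 : (∫ t in (1-p)..(1-p+σ), (a + K₂*(t-(1-p))))
        ≤ ∫ t in (1-p)..(1-p+σ), Q t := by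
      apply intervalIntegral.integral_mono_on (by linarith)
        ((continuous_const.add (continuous_const.mul
          (continuous_id'.sub continuous_const))).intervalIntegrable _ _) hint1
      intro t htt
      have hs1 : 0 ≤ t - (1-p) := by linarith [htt.1]
      have hs2 : t - (1-p) ≤ σ := by linarith [htt.2]
      have hq := hQlo (t - (1-p)) hs1 (le_trans hs2 hσs₀) (by linarith)
      rw [show 1-p+(t-(1-p)) = t by ring] at hq
      show a + K₂*(t-(1-p)) ≤ Q t
      linarith
    have hcomp : (∫ t in (1-p)..(1-p+σ), (a + K₂*(t-(1-p))))
        = a*σ + K₂*σ^2/2 := by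
      rw [intervalIntegral.integral_add (f := fun _ => a) (g := fun t => K₂*(t-(1-p))) intervalIntegrable_const
        ((continuous_const.mul (continuous_id'.sub continuous_const)).intervalIntegrable _ _),
        intervalIntegral.integral_const, hlinint]
      simp only [smul_eq_mul]
      ring
    have hlow2 : 0 ≤ ∫ t in (1-p+σ)..1, Q t := by
      apply intervalIntegral.integral_nonneg_of_ae_restrict (by linarith)
      have h1 : ∀ᵐ t ∂(volume.restrict (Set.Icc (1-p+σ) 1)), t ∈ Set.Icc (1-p+σ) 1 :=
        ae_restrict_mem measurableSet_Icc
      have h2 : ∀ᵐ (t:ℝ) ∂(volume.restrict (Set.Icc (1-p+σ) 1)), t ≠ 1 := by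
        apply ae_restrict_of_ae
        rw [ae_iff]
        have heq1 : {t : ℝ | ¬ t ≠ 1} = {1} := by ext t; simp
        rw [heq1]
        exact Real.volume_singleton
      filter_upwards [h1, h2] with t ht hne
      exact hQnonneg t ⟨by linarith [ht.1], lt_of_le_of_ne ht.2 hne⟩
    have hmp0 : m * p = 0 := by rw [ham]; ring
    have hKσpos : 0 < K₂*σ^2/2 := by positivity
    rw [hmp0] at hfoc
    have haσ : a*σ = 0 := by rw [← h]; ring
    linarith [hlow1, hlow2, hcomp, hsplit, hKσpos, hfoc, haσ]
  have hmpos : 0 < m := by rw [hm]; linarith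
  -- determinant margin
  have h4aθ : 4*a*θ ≤ 2*p - a*b := by
    have h2 : (4*a*(2*p-a*b))/(4*a+1) ≤ 2*p-a*b := by
      rw [div_le_iff₀ (by positivity)]
      nlinarith [hab2p]
    have h3 : 4*a*θ ≤ 4*a*((2*p-a*b)/(4*a+1)) :=
      mul_le_mul_of_nonneg_left hθ2 (by linarith)
    have h4 : 4*a*((2*p-a*b)/(4*a+1)) = (4*a*(2*p-a*b))/(4*a+1) := by ring
    linarith
  have hmul1 : 2*a*(4*a*θ) ≤ 2*a*(2*p - a*b) :=
    mul_le_mul_of_nonneg_left h4aθ (by linarith)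
  have hmul2 : 2*a*(a*b) < 2*a*(2*p) := mul_lt_mul_of_pos_left hab2p (by linarith)
  have hnum : m^2*(b+2*θ) < 4*p*m := by
    rw [hm]
    nlinarith [hmul1, hmul2]
  have hd0 : 0 < 4*p*m*K₂ - m^2 := by
    have hK2inv : K₂*(b+2*θ) = 1 := by rw [hK₂def]; field_simp
    have hlt := mul_lt_mul_of_pos_right hnum hK₂pos
    have heq : m^2*(b+2*θ)*K₂ = m^2 := by
      calc m^2*(b+2*θ)*K₂ = m^2*(K₂*(b+2*θ)) := by ring
        _ = m^2 := by rw [hK2inv, mul_one]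
    linarith
  set d0 : ℝ := 4*p*m*K₂ - m^2 with hd0def
  have hden : 0 < 8*K₂*(p+m)+1 := by positivity
  set ε : ℝ := min s₀ (min (p/2) (min ((1-p)/2) (min (m/2) (d0/(8*K₂*(p+m)+1)))))
    with hεdef
  have hεpos : 0 < ε := by
    refine lt_min hs₀pos (lt_min (by linarith) (lt_min (by linarith)
      (lt_min (by linarith) (by positivity))))
  have hεs₀ : ε ≤ s₀ := min_le_left _ _
  have hεp : ε ≤ p/2 := le_trans (min_le_right _ _) (min_le_left _ _)
  have hε1p : ε ≤ (1-p)/2 :=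
    le_trans (min_le_right _ _) (le_trans (min_le_right _ _) (min_le_left _ _))
  have hεm : ε ≤ m/2 :=
    le_trans (min_le_right _ _) (le_trans (min_le_right _ _)
      (le_trans (min_le_right _ _) (min_le_left _ _)))
  have hεd : ε ≤ d0/(8*K₂*(p+m)+1) :=
    le_trans (min_le_right _ _) (le_trans (min_le_right _ _)
      (le_trans (min_le_right _ _) (min_le_right _ _)))
  have hεdet : 8*K₂*(p+m)*ε ≤ d0 := by
    rw [le_div_iff₀ hden] at hεd
    have hr : ε*(8*K₂*(p+m)+1) = 8*K₂*(p+m)*ε + ε := by ring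
    linarith
  constructor
  · -- positive definiteness
    rw [← ha]
    apply posdef_fin_two (by linarith : (0:ℝ) < 2*p)
    rw [show f a = b from hbdef.symm, hm]
    have hC : 2*p*(2*(2*a)/b) = 8*p*a/b := by ring
    rw [hC, lt_div_iff₀ hbpos]
    nlinarith [mul_lt_mul_of_pos_left hab2p (by linarith : (0:ℝ) < 4*a)]
  · -- strict local minimum
    refine ⟨ε, hεpos, ?_⟩
    intro z hz hzne
    obtain ⟨m', p'⟩ := z
    rw [Metric.mem_ball, Prod.dist_eq] at hz
    have hu : |m' - m| < ε := by
      rw [← Real.dist_eq]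
      exact lt_of_le_of_lt (le_max_left (dist m' m) (dist p' p)) hz
    have hv : |p' - p| < ε := by
      rw [← Real.dist_eq]
      exact lt_of_le_of_lt (le_max_right (dist m' m) (dist p' p)) hz
    rw [abs_lt] at hu hv
    have hp'0 : 0 < p' := by linarith [hεp, hv.1]
    have hp'1 : p' < 1 := by linarith [hε1p, hv.2]
    have hm'pos : 0 < m' := by linarith [hεm, hu.1]
    have h1p' : (1-p') ∈ Set.Ioo (0:ℝ) 1 := ⟨by linarith, by linarith⟩
    have hintA : IntervalIntegrable Q volume (1-p') (1-p) := hQuIcc _ _ h1p' ht1p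
    have hsplit := intervalIntegral.integral_add_adjacent_intervals hintA hQint1
    set I : ℝ := ∫ t in (1-p')..(1-p), Q t with hIdef
    have hIub : I ≤ a*(p'-p) - K₂*(p'-p)^2/2 := by
      rcases le_or_gt p p' with hvpos | hvneg
      · have hub : I ≤ ∫ t in (1-p')..(1-p), (a + K₂*(t-(1-p))) := by
          apply intervalIntegral.integral_mono_on (by linarith) hintA
            ((continuous_const.add (continuous_const.mul
              (continuous_id'.sub continuous_const))).intervalIntegrable _ _)
          intro t htt
          have hs1 : 0 ≤ (1-p) - t := by linarith [htt.2]
          have hs2 : (1-p) - t ≤ p' - p := by linarith [htt.1]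
          have hq := hQup ((1-p)-t) hs1 (by linarith [hv.2, hεs₀])
            (by linarith [htt.1])
          rw [show 1-p-((1-p)-t) = t by ring] at hq
          show Q t ≤ a + K₂*(t-(1-p))
          linarith
        have hcomp : (∫ t in (1-p')..(1-p), (a + K₂*(t-(1-p))))
            = a*(p'-p) - K₂*(p'-p)^2/2 := by
          rw [intervalIntegral.integral_add (f := fun _ => a) (g := fun t => K₂*(t-(1-p))) intervalIntegrable_const
            ((continuous_const.mul (continuous_id'.sub continuous_const)).intervalIntegrable _ _),
            intervalIntegral.integral_const, hlinint]
          simp only [smul_eq_mul]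
          ring
        linarith
      · have hlb : (∫ t in (1-p)..(1-p'), (a + K₂*(t-(1-p))))
            ≤ ∫ t in (1-p)..(1-p'), Q t := by
          apply intervalIntegral.integral_mono_on (by linarith)
            ((continuous_const.add (continuous_const.mul
              (continuous_id'.sub continuous_const))).intervalIntegrable _ _)
            (hQuIcc _ _ ht1p h1p')
          intro t htt
          have hs1 : 0 ≤ t-(1-p) := by linarith [htt.1]
          have hs2 : t-(1-p) ≤ p - p' := by linarith [htt.2]
          have hq := hQlo (t-(1-p)) hs1 (by linarith [hv.1, hεs₀]) (by linarith)
          rw [show 1-p+(t-(1-p)) = t by ring] at hq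
          show a + K₂*(t-(1-p)) ≤ Q t
          linarith
        have hcomp : (∫ t in (1-p)..(1-p'), (a + K₂*(t-(1-p))))
            = a*(p-p') + K₂*(p-p')^2/2 := by
          rw [intervalIntegral.integral_add (f := fun _ => a) (g := fun t => K₂*(t-(1-p))) intervalIntegrable_const
            ((continuous_const.mul (continuous_id'.sub continuous_const)).intervalIntegrable _ _),
            intervalIntegral.integral_const, hlinint]
          simp only [smul_eq_mul]
          ring
        have hsymm : I = -(∫ t in (1-p)..(1-p'), Q t) := by
          rw [hIdef]
          exact intervalIntegral.integral_symm _ _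
        have hsq : (p-p')^2 = (p'-p)^2 := by ring
        rw [hsymm]
        linarith [hlb, hcomp]
    have hψdiff : ψ m' p' - ψ m p = m'^2*p' - 2*m'*I - 2*m'*m*p + m^2*p := by
      rw [hψ m' p', hψ m p, ← hsplit, ← hfoc]
      ring
    rcases eq_or_ne p' p with hpp | hpp
    · have hI0 : I = 0 := by rw [hIdef, hpp]; exact intervalIntegral.integral_same
      have hune : m' ≠ m := by
        intro hmm'
        exact hzne (by rw [hmm', hpp])
      have hval : ψ m' p' - ψ m p = p*(m'-m)^2 := by rw [hψdiff, hI0, hpp]; ring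
      have hposq : 0 < p*(m'-m)^2 := by
        have hd : m' - m ≠ 0 := sub_ne_zero.2 hune
        positivity
      linarith
    · have hvne : p' - p ≠ 0 := sub_ne_zero.2 hpp
      have hA : 0 < p - ε := by linarith [hεp]
      have hdet' : m^2 < 4*(p-ε)*((m-ε)*K₂) := by
        have hsq : 0 ≤ 4*(ε^2*K₂) := by positivity
        have hd0' : 0 < d0 := hd0
        linarith [hεdet, hd0', hd0def, hsq]
      have hq := quad_pos (u := m'-m) (v := p'-p) hA hdet' (Or.inr hvne)
      have hEb : I - a*(p'-p) ≤ -(K₂*(p'-p)^2/2) := by linarith [hIub]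
      have hid : m'^2*p' - 2*m'*I - 2*m'*m*p + m^2*p
          = p'*(m'-m)^2 + m*(m'-m)*(p'-p) - 2*m'*(I - a*(p'-p)) := by
        rw [hm]; ring
      have h3 : m'*K₂*(p'-p)^2 ≤ -(2*m'*(I - a*(p'-p))) := by
        have h := mul_le_mul_of_nonneg_left hEb (by linarith : (0:ℝ) ≤ 2*m')
        have hr : 2*m'*(-(K₂*(p'-p)^2/2)) = -(m'*K₂*(p'-p)^2) := by ring
        linarith [h]
      have h1 : (p-ε)*(m'-m)^2 ≤ p'*(m'-m)^2 :=
        mul_le_mul_of_nonneg_right (by linarith [hv.1]) (sq_nonneg _)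
      have h2 : ((m-ε)*K₂)*(p'-p)^2 ≤ (m'*K₂)*(p'-p)^2 :=
        mul_le_mul_of_nonneg_right
          (mul_le_mul_of_nonneg_right (by linarith [hu.1]) hK₂pos.le) (sq_nonneg _)
      have hfin : 0 < ψ m' p' - ψ m p := by
        rw [hψdiff, hid]
        linarith [hq, h1, h2, h3]
      linarith
end
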